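/- arXiv:0811.3500 — 2 statements merged into one kernel-verified Lean document; each statement's English description precedes it below -/
import Mathlib

section
/- For every sequence of pivots φ applicable to a simple graph G there exists a reduced sequence of pivots φ' applicable to G with sup(φ') = sup(φ); consequently Gφ = Gφ'. Here a sequence is reduced if no vertex occurs more than once among its pivot pairs. -/
set_option linter.unusedSectionVars false

variable {V : Type*} [Fintype V] [DecidableEq V]

/-- Local complementation at a vertex `w`: complement the edges within `N_G(w)`. -/
def SimpleGraph.localComp (G : SimpleGraph V) (w : V) : SimpleGraph V where
  Adj x y := x ≠ y ∧ Xor' (G.Adj x y) (G.Adj x w ∧ G.Adj y w)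
  symm := by
    constructor
    intro x y ⟨hne, hx⟩
    refine ⟨hne.symm, ?_⟩
    have h1 := G.adj_comm x y
    unfold Xor' Xor at hx ⊢
    tauto
  loopless := by constructor; intro x ⟨h, _⟩; exact h rfl

/-- `x ∼_G y` : `x = y` or `{x,y}` is an edge of `G`. -/
def SimpleGraph.nbr (G : SimpleGraph V) (x y : V) : Prop := x = y ∨ G.Adj x y

theorem SimpleGraph.nbr_comm (G : SimpleGraph V) (x y : V) : G.nbr x y ↔ G.nbr y x :=
  or_congr eq_comm (G.adj_comm x y)

private theorem xor_swap_right (a b c : Prop) : Xor' (Xor' a b) c ↔ Xor' (Xor' a c) b := by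
  unfold Xor' Xor; tauto

/-- The pivot `G[uv]` of `G` on an edge `{u,v}`, characterized by
`x ∼_{G[uv]} y ⟺ (x ∼_G y) XOR ((x ∼_G u) ∧ (y ∼_G v)) XOR ((x ∼_G v) ∧ (y ∼_G u))`. -/
def SimpleGraph.pivot (G : SimpleGraph V) (u v : V) : SimpleGraph V where
  Adj x y := x ≠ y ∧
    Xor' (Xor' (G.nbr x y) (G.nbr x u ∧ G.nbr y v)) (G.nbr x v ∧ G.nbr y u)
  symm := by
    constructor
    intro x y ⟨hne, hx⟩
    refine ⟨hne.symm, ?_⟩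
    show Xor' (Xor' (G.nbr y x) (G.nbr y u ∧ G.nbr x v)) (G.nbr y v ∧ G.nbr x u)
    rw [G.nbr_comm y x, and_comm (a := G.nbr y u) (b := G.nbr x v),
      and_comm (a := G.nbr y v) (b := G.nbr x u)]
    exact (xor_swap_right _ _ _).mp hx
  loopless := by constructor; intro x ⟨h, _⟩; exact h rfl

/-- Determinant over GF(2) of the adjacency matrix of the subgraph of `G` induced by `S`. -/
noncomputable def gdet (G : SimpleGraph V) (S : Finset V) : ZMod 2 := by
  classical
  exact Matrix.det (Matrix.of fun i j : S => if G.Adj i j then (1 : ZMod 2) else 0)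

/-- Apply a sequence of pivots (left to right). -/
def applyPivots (G : SimpleGraph V) : List (V × V) → SimpleGraph V
  | [] => G
  | p :: φ => applyPivots (G.pivot p.1 p.2) φ

/-- A sequence of pivots is applicable when each pair is an edge of the graph
obtained by applying all preceding pivots. -/
def PivotsApplicable (G : SimpleGraph V) : List (V × V) → Prop
  | [] => True
  | p :: φ => G.Adj p.1 p.2 ∧ PivotsApplicable (G.pivot p.1 p.2) φ

/-- The support of a sequence of pivots: vertices occurring an odd number of times. -/
def pivotSupport (φ : List (V × V)) : Finset V :=
  Finset.univ.filter fun x => Odd ((φ.flatMap fun p => [p.1, p.2]).count x)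

/-- A sequence of pivots is reduced if its pivot vertices are pairwise distinct. -/
def ReducedSeq (φ : List (V × V)) : Prop := (φ.flatMap fun p => [p.1, p.2]).Nodup

/-- The number of perfect matchings of the subgraph of `G` induced by `S`:
sets of edges of `G` inside `S` such that every vertex of `S` lies in exactly one of them. -/
noncomputable def pmCount (G : SimpleGraph V) (S : Finset V) : ℕ := by
  classical
  exact (Finset.univ.filter fun P : Finset (Sym2 V) =>
    (∀ e ∈ P, e ∈ G.edgeSet ∧ ∀ v ∈ e, v ∈ S) ∧
    ∀ v ∈ S, ∃! e, e ∈ P ∧ v ∈ e).card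

set_option maxHeartbeats 1000000

open scoped Classical

noncomputable def amat (G : SimpleGraph V) : Matrix V V (ZMod 2) :=
  fun i j => if G.Adj i j then 1 else 0

noncomputable def nbm (G : SimpleGraph V) (i j : V) : ZMod 2 :=
  if G.nbr i j then 1 else 0

lemma amat_diag (G : SimpleGraph V) (i : V) : amat G i i = 0 := by
  simp [amat]

lemma amat_comm (G : SimpleGraph V) (i j : V) : amat G i j = amat G j i := by
  simp [amat, G.adj_comm]

lemma nbm_eq (G : SimpleGraph V) (i j : V) :
    nbm G i j = amat G i j + if i = j then 1 else 0 := by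
  rcases eq_or_ne i j with rfl | h
  · simp [nbm, amat, SimpleGraph.nbr]
  · simp [nbm, amat, SimpleGraph.nbr, h]

private lemma ind_xor (p q : Prop) [Decidable p] [Decidable q] :
    (if Xor' p q then (1 : ZMod 2) else 0) = (if p then 1 else 0) + (if q then 1 else 0) := by
  by_cases hp : p <;> by_cases hq : q <;> simp [Xor', hp, hq] <;> decide

private lemma ind_and (p q : Prop) [Decidable p] [Decidable q] :
    (if p ∧ q then (1 : ZMod 2) else 0) = (if p then 1 else 0) * (if q then 1 else 0) := by
  by_cases hp : p <;> by_cases hq : q <;> simp [hp, hq]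

lemma amat_pivot (G : SimpleGraph V) (u v i j : V) :
    amat (G.pivot u v) i j
      = amat G i j + nbm G i u * nbm G j v + nbm G i v * nbm G j u := by
  rcases eq_or_ne i j with rfl | hij
  · rw [amat_diag, amat_diag, zero_add, mul_comm (nbm G i v), CharTwo.add_self_eq_zero]
  · show (if (G.pivot u v).Adj i j then (1:ZMod 2) else 0) = _
    have hiff : (G.pivot u v).Adj i j ↔
        Xor' (Xor' (G.nbr i j) (G.nbr i u ∧ G.nbr j v)) (G.nbr i v ∧ G.nbr j u) := by
      simp [SimpleGraph.pivot, hij]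
    rw [if_congr hiff rfl rfl, ind_xor, ind_xor, ind_and, ind_and]
    have hnbr : (if G.nbr i j then (1:ZMod 2) else 0) = amat G i j := by
      simp [SimpleGraph.nbr, amat, hij]
    rw [hnbr]; rfl

def LG (G : SimpleGraph V) : Set ((V → ZMod 2) × (V → ZMod 2)) :=
  {p | p.2 = (amat G).mulVec p.1}

noncomputable def swapAt (S : Finset V) (p : (V → ZMod 2) × (V → ZMod 2)) :
    (V → ZMod 2) × (V → ZMod 2) :=
  (fun i => if i ∈ S then p.2 i else p.1 i, fun i => if i ∈ S then p.1 i else p.2 i)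

lemma swapAt_empty (p : (V → ZMod 2) × (V → ZMod 2)) : swapAt ∅ p = p := by
  simp [swapAt]

lemma swapAt_swapAt (S T : Finset V) (p : (V → ZMod 2) × (V → ZMod 2)) :
    swapAt S (swapAt T p) = swapAt (symmDiff S T) p := by
  unfold swapAt
  refine Prod.ext ?_ ?_ <;> funext i <;>
    by_cases hS : i ∈ S <;> by_cases hT : i ∈ T <;>
      simp [hS, hT, Finset.mem_symmDiff]

lemma LG_graph (G : SimpleGraph V) : ∀ a, ∃! b, (a, b) ∈ LG G :=
  fun a => ⟨(amat G).mulVec a, rfl, fun _ hb => hb⟩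

lemma LG_inj {G G' : SimpleGraph V} (h : LG G = LG G') : G = G' := by
  have hm : ∀ i j, amat G i j = amat G' i j := by
    intro i j
    have h1 : (Pi.single j 1, (amat G).mulVec (Pi.single j 1)) ∈ LG G' := by
      rw [← h]; rfl
    have h2 : (amat G).mulVec (Pi.single j 1) = (amat G').mulVec (Pi.single j 1) := h1
    have := congrFun h2 i
    simpa [Matrix.mulVec_single] using this
  ext i j
  have := hm i j
  simp only [amat] at this
  constructor <;> intro hadj
  · by_contra h2
    rw [if_pos hadj, if_neg h2] at this; exact one_ne_zero this
  · by_contra h2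
    rw [if_neg h2, if_pos hadj] at this; exact one_ne_zero this.symm

private lemma two_zero : (2 : ZMod 2) = 0 := rfl

lemma nbm_self (G : SimpleGraph V) (i : V) : nbm G i i = 1 := by
  simp [nbm, SimpleGraph.nbr]

lemma nbm_of_adj (G : SimpleGraph V) {i j : V} (h : G.Adj i j) : nbm G i j = 1 := by
  simp [nbm, SimpleGraph.nbr, h]

lemma nbm_of_ne (G : SimpleGraph V) {i j : V} (h : i ≠ j) : nbm G i j = amat G i j := by
  rw [nbm_eq, if_neg h, add_zero]

lemma amat_of_adj (G : SimpleGraph V) {i j : V} (h : G.Adj i j) : amat G i j = 1 := by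
  simp [amat, h]

lemma swap_fwd (G : SimpleGraph V) {u v : V} (huv : G.Adj u v) (x : V → ZMod 2) :
    swapAt ({u,v} : Finset V) (x, (amat G).mulVec x) ∈ LG (G.pivot u v) := by
  have hne : u ≠ v := huv.ne
  set A := amat G with hA
  set y := A.mulVec x with hy
  set a := x u + y u with ha
  set b := x v + y v with hb
  set xt : V → ZMod 2 := fun j => if j ∈ ({u,v} : Finset V) then y j else x j with hxt
  show (fun i => if i ∈ ({u,v}:Finset V) then x i else y i)
      = (amat (G.pivot u v)).mulVec xt
  have hxt' : xt = x + Pi.single u a + Pi.single v b := by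
    funext j
    rcases eq_or_ne j u with rfl | hju
    · simp only [hxt, Pi.add_apply, Pi.single_apply, Finset.mem_insert, Finset.mem_singleton]
      simp only [true_or, or_true, if_true, if_neg hne]
      linear_combination (- x j) * two_zero
    · rcases eq_or_ne j v with rfl | hjv
      · simp only [hxt, Pi.add_apply, Pi.single_apply, Finset.mem_insert, Finset.mem_singleton]
        simp only [true_or, or_true, if_true, if_neg hju]
        linear_combination (- x j) * two_zero
      · simp [hxt, Pi.single_apply, hju, hjv]
  have hAxt : ∀ i, A.mulVec xt i = y i + A i u * a + A i v * b := by
    intro i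
    rw [hxt', Matrix.mulVec_add, Matrix.mulVec_add, Matrix.mulVec_single, Matrix.mulVec_single]
    rfl
  have hdot : ∀ (M : V → ZMod 2) (w : V → ZMod 2), True := fun _ _ => trivial
  have hAuv : A u v = 1 := amat_of_adj G huv
  have hAvu : A v u = 1 := amat_of_adj G huv.symm
  have hAuu : A u u = 0 := amat_diag G u
  have hAvv : A v v = 0 := amat_diag G v
  have hxtu : xt u = y u := by simp [hxt]
  have hxtv : xt v = y v := by simp [hxt]
  have hsumv : ∑ j, nbm G j v * xt j = a := by
    have step : ∀ j ∈ Finset.univ, nbm G j v * xt j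
        = amat G v j * xt j + (if j = v then 1 else 0) * xt j := by
      intro j _
      rw [nbm_eq, amat_comm G v j]; ring
    rw [Finset.sum_congr rfl step, Finset.sum_add_distrib]
    have h1 : ∑ j, amat G v j * xt j = A.mulVec xt v := rfl
    have h2 : ∑ j, (if j = v then (1:ZMod 2) else 0) * xt j = xt v := by simp
    rw [h1, h2, hAxt v, hAvu, hAvv, hxtv]
    linear_combination (y v) * two_zero
  have hsumu : ∑ j, nbm G j u * xt j = b := by
    have step : ∀ j ∈ Finset.univ, nbm G j u * xt j
        = amat G u j * xt j + (if j = u then 1 else 0) * xt j := by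
      intro j _
      rw [nbm_eq, amat_comm G u j]; ring
    rw [Finset.sum_congr rfl step, Finset.sum_add_distrib]
    have h1 : ∑ j, amat G u j * xt j = A.mulVec xt u := rfl
    have h2 : ∑ j, (if j = u then (1:ZMod 2) else 0) * xt j = xt u := by simp
    rw [h1, h2, hAxt u, hAuv, hAuu, hxtu]
    linear_combination (y u) * two_zero
  funext i
  have expand : (amat (G.pivot u v)).mulVec xt i
      = A.mulVec xt i + nbm G i u * a + nbm G i v * b := by
    have step : ∀ j ∈ Finset.univ, amat (G.pivot u v) i j * xt j
        = amat G i j * xt j + nbm G i u * (nbm G j v * xt j)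
          + nbm G i v * (nbm G j u * xt j) := by
      intro j _
      rw [amat_pivot]; ring
    show ∑ j, amat (G.pivot u v) i j * xt j = _
    rw [Finset.sum_congr rfl step, Finset.sum_add_distrib, Finset.sum_add_distrib,
      ← Finset.mul_sum, ← Finset.mul_sum, hsumv, hsumu]
    rfl
  rw [expand, hAxt i]
  rcases eq_or_ne i u with rfl | hiu
  · rw [nbm_self, nbm_of_adj G huv, hAuu, hAuv]
    simp only [Finset.mem_insert, Finset.mem_singleton, true_or, if_true]
    linear_combination (-(y i + b)) * two_zero
  · rcases eq_or_ne i v with rfl | hiv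
    · rw [nbm_self, nbm_of_adj G huv.symm, hAvu, hAvv]
      simp only [Finset.mem_insert, Finset.mem_singleton, or_true, if_true]
      linear_combination (-(y i + a)) * two_zero
    · rw [nbm_of_ne G hiu, nbm_of_ne G hiv]
      simp only [Finset.mem_insert, Finset.mem_singleton, hiu, hiv, or_self, if_false]
      linear_combination (-(A i u * a + A i v * b)) * two_zero

lemma swap_LG (G : SimpleGraph V) {u v : V} (huv : G.Adj u v) :
    swapAt ({u,v} : Finset V) '' LG G = LG (G.pivot u v) := by
  have hne : u ≠ v := huv.ne
  set A := amat G with hA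
  -- injectivity of first coordinate map
  have hinj : Function.Injective
      (fun x : V → ZMod 2 => (swapAt ({u,v} : Finset V) (x, A.mulVec x)).1) := by
    intro x z h
    have hout : ∀ j, j ∉ ({u,v} : Finset V) → x j = z j := by
      intro j hj
      have hj' : ¬(j = u ∨ j = v) := by simpa using hj
      have := congrFun h j
      simpa [swapAt, hj'] using this
    have hrow : ∀ w w' : V, w ∈ ({u,v} : Finset V) → G.Adj w w' →
        A.mulVec x w = A.mulVec z w → x w' = z w' → True := fun _ _ _ _ _ _ => trivial
    have hsplit : ∀ (w : V) (f : V → ZMod 2),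
        ∑ j, A w j * f j = (∑ j ∈ Finset.univ \ {u,v}, A w j * f j) + (A w u * f u + A w v * f v) := by
      intro w f
      rw [← Finset.sum_sdiff (Finset.subset_univ ({u,v} : Finset V))]
      congr 1
      rw [Finset.sum_pair hne]
    have hmem : ∀ w ∈ ({u,v} : Finset V), A.mulVec x w = A.mulVec z w := by
      intro w hw
      have hw' : w = u ∨ w = v := by simpa using hw
      have := congrFun h w
      simpa [swapAt, hw'] using this
    have hsd : ∀ w, (∑ j ∈ Finset.univ \ {u,v}, A w j * x j)
        = ∑ j ∈ Finset.univ \ {u,v}, A w j * z j := by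
      intro w
      refine Finset.sum_congr rfl fun j hj => ?_
      rw [hout j (Finset.mem_sdiff.mp hj).2]
    have hu' := hmem u (by simp)
    have hv' := hmem v (by simp)
    have hxu : A u u = 0 := amat_diag G u
    have hxv : A v v = 0 := amat_diag G v
    have hAuv : A u v = 1 := amat_of_adj G huv
    have hAvu : A v u = 1 := amat_of_adj G huv.symm
    have exu : x v = z v := by
      have h1 : (∑ j ∈ Finset.univ \ {u,v}, A u j * x j) + (A u u * x u + A u v * x v)
          = (∑ j ∈ Finset.univ \ {u,v}, A u j * z j) + (A u u * z u + A u v * z v) := by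
        rw [← hsplit u x, ← hsplit u z]; exact hu'
      rw [hsd u, hxu, hAuv] at h1
      simpa using add_left_cancel h1
    have exv : x u = z u := by
      have h1 : (∑ j ∈ Finset.univ \ {u,v}, A v j * x j) + (A v u * x u + A v v * x v)
          = (∑ j ∈ Finset.univ \ {u,v}, A v j * z j) + (A v u * z u + A v v * z v) := by
        rw [← hsplit v x, ← hsplit v z]; exact hv'
      rw [hsd v, hxv, hAvu] at h1
      simpa using add_left_cancel h1
    funext j
    by_cases hj : j ∈ ({u,v} : Finset V)
    · rcases Finset.mem_insert.mp hj with rfl | hj2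
      · exact exv
      · rw [Finset.mem_singleton.mp hj2]; exact exu
    · exact hout j hj
  have hsurj := Finite.injective_iff_surjective.mp hinj
  apply Set.Subset.antisymm
  · rintro p ⟨⟨x, y⟩, hq, rfl⟩
    have hy : y = A.mulVec x := hq
    subst hy
    exact swap_fwd G huv x
  · intro p hp
    obtain ⟨x, hx1⟩ := hsurj p.1
    have hmem := swap_fwd G huv x
    have h2 : (swapAt ({u,v} : Finset V) (x, A.mulVec x)).2 = p.2 := by
      have e1 : (swapAt ({u,v} : Finset V) (x, A.mulVec x)).2
          = (amat (G.pivot u v)).mulVec (swapAt ({u,v} : Finset V) (x, A.mulVec x)).1 := hmem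
      have hx1' : (swapAt ({u,v} : Finset V) (x, A.mulVec x)).1 = p.1 := hx1
      rw [e1, hx1']
      exact hp.symm
    exact ⟨(x, A.mulVec x), rfl, Prod.ext hx1 h2⟩

lemma pivotSupport_nil : pivotSupport ([] : List (V × V)) = ∅ := by
  simp [pivotSupport]

lemma pivotSupport_cons (u v : V) (huv : u ≠ v) (ψ : List (V × V)) :
    pivotSupport ((u, v) :: ψ) = symmDiff ({u, v} : Finset V) (pivotSupport ψ) := by
  ext x
  simp only [pivotSupport, Finset.mem_filter, Finset.mem_univ, true_and, Finset.mem_symmDiff,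
    List.flatMap_cons, List.count_append, Finset.mem_insert, Finset.mem_singleton]
  rcases eq_or_ne x u with rfl | hxu
  · simp [List.count_cons, huv.symm, Nat.odd_iff, Nat.add_mod]
    omega
  · rcases eq_or_ne x v with rfl | hxv
    · simp [List.count_cons, huv, Nat.odd_iff, Nat.add_mod]
      omega
    · simp [List.count_cons, hxu, hxv, Ne.symm hxu, Ne.symm hxv, Nat.odd_iff]
      try omega

lemma mem_pivotSupport_of_reduced {ψ : List (V × V)} (h : ReducedSeq ψ) {x : V}
    (hx : x ∈ ψ.flatMap fun p => [p.1, p.2]) : x ∈ pivotSupport ψ := by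
  simp only [pivotSupport, Finset.mem_filter, Finset.mem_univ, true_and]
  rw [List.count_eq_one_of_mem h hx]
  exact odd_one

lemma exists_edge_of_graph (G : SimpleGraph V) (S : Finset V) (hne : S.Nonempty)
    (hgraph : ∀ a, ∃! b, (a, b) ∈ swapAt S '' LG G) :
    ∃ u ∈ S, ∃ v ∈ S, G.Adj u v := by
  by_contra hcon
  push_neg at hcon
  obtain ⟨s, hs⟩ := hne
  have h0 : ((0 : V → ZMod 2), (0 : V → ZMod 2)) ∈ swapAt S '' LG G := by
    refine ⟨(0, 0), ?_, ?_⟩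
    · show (0 : V → ZMod 2) = (amat G).mulVec 0
      rw [Matrix.mulVec_zero]
    · refine Prod.ext ?_ ?_ <;> funext i <;> simp [swapAt]
  have hA0 : ∀ i, i ∈ S → (amat G).mulVec (Pi.single s 1) i = 0 := by
    intro i hi
    have : (amat G).mulVec (Pi.single s 1) i = amat G i s * 1 := by
      rw [Matrix.mulVec_single]; simp
    rw [this, mul_one]
    rcases eq_or_ne i s with rfl | his
    · exact amat_diag G i
    · unfold amat
      rw [if_neg (hcon i hi s hs)]
  have h1 : ((0 : V → ZMod 2),
      (swapAt S (Pi.single s 1, (amat G).mulVec (Pi.single s 1))).2) ∈ swapAt S '' LG G := by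
    refine ⟨(Pi.single s 1, (amat G).mulVec (Pi.single s 1)), rfl, ?_⟩
    refine Prod.ext ?_ rfl
    funext i
    by_cases hi : i ∈ S
    · simpa [swapAt, hi] using hA0 i hi
    · have his : ¬ i = s := by rintro rfl; exact hi hs
      simp [swapAt, hi, Pi.single_apply, his]
  obtain ⟨b, _, hbu⟩ := hgraph 0
  have e0 := hbu _ h0
  have e1 := hbu _ h1
  have heq : (0 : V → ZMod 2) = (swapAt S (Pi.single s 1, (amat G).mulVec (Pi.single s 1))).2 := by
    rw [e0, e1]
  have hval := congrFun heq s
  simp [swapAt, hs] at hval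

lemma LG_applyPivots : ∀ (φ : List (V × V)) (G : SimpleGraph V), PivotsApplicable G φ →
    LG (applyPivots G φ) = swapAt (pivotSupport φ) '' LG G := by
  intro φ
  induction φ with
  | nil =>
    intro G _
    rw [pivotSupport_nil]
    show LG G = _
    rw [show swapAt (∅ : Finset V) = id from funext swapAt_empty, Set.image_id]
  | cons p ψ ih =>
    intro G hap
    obtain ⟨hadj, happ⟩ := hap
    show LG (applyPivots (G.pivot p.1 p.2) ψ) = _
    rw [ih _ happ, ← swap_LG G hadj, Set.image_image,
      pivotSupport_cons p.1 p.2 hadj.ne]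
    have hfun : (fun q => swapAt (pivotSupport ψ) (swapAt ({p.1, p.2} : Finset V) q))
        = swapAt (symmDiff ({p.1, p.2} : Finset V) (pivotSupport ψ)) := by
      funext q; rw [swapAt_swapAt, symmDiff_comm]
    rw [hfun]

lemma reduce_main : ∀ (n : ℕ) (S : Finset V), S.card = n → ∀ G : SimpleGraph V,
    (∀ a, ∃! b, (a, b) ∈ swapAt S '' LG G) →
    ∃ ψ : List (V × V), PivotsApplicable G ψ ∧ ReducedSeq ψ ∧ pivotSupport ψ = S ∧
      LG (applyPivots G ψ) = swapAt S '' LG G := by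
  intro n
  induction n using Nat.strong_induction_on with
  | _ n ih =>
    intro S hcard G hgraph
    rcases S.eq_empty_or_nonempty with rfl | hne
    · refine ⟨[], trivial, by simp [ReducedSeq], pivotSupport_nil, ?_⟩
      show LG G = _
      rw [show swapAt (∅ : Finset V) = id from funext swapAt_empty, Set.image_id]
    · obtain ⟨u, hu, v, hv, huv⟩ := exists_edge_of_graph G S hne hgraph
      have hneuv : u ≠ v := huv.ne
      set S' := S \ {u, v} with hS'
      have hsub : ({u,v} : Finset V) ⊆ S := by
        intro w hw
        rcases Finset.mem_insert.mp hw with rfl | hw2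
        · exact hu
        · rw [Finset.mem_singleton.mp hw2]; exact hv
      have hsymm : symmDiff S' ({u,v} : Finset V) = S := by
        ext w
        simp only [Finset.mem_symmDiff, hS', Finset.mem_sdiff, Finset.mem_insert,
          Finset.mem_singleton]
        by_cases hw : w = u ∨ w = v
        · rcases hw with rfl | rfl <;> simp [hu, hv]
        · push_neg at hw
          simp [hw.1, hw.2]
      have hcard' : S'.card < n := by
        rw [← hcard]
        exact Finset.card_lt_card (Finset.sdiff_ssubset hsub ⟨u, by simp⟩)
      have hcompfun : (fun q => swapAt S' (swapAt ({u,v} : Finset V) q)) = swapAt S := by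
        funext q; rw [swapAt_swapAt, hsymm]
      have hG' : ∀ a, ∃! b, (a, b) ∈ swapAt S' '' LG (G.pivot u v) := by
        rw [← swap_LG G huv, Set.image_image, hcompfun]
        exact hgraph
      obtain ⟨ψ, hψapp, hψred, hψsup, hψLG⟩ := ih _ hcard' S' rfl (G.pivot u v) hG'
      have hu2 : u ∉ S' := by simp [hS']
      have hv2 : v ∉ S' := by simp [hS']
      have hul : u ∉ ψ.flatMap fun p => [p.1, p.2] :=
        fun h => hu2 (hψsup ▸ mem_pivotSupport_of_reduced hψred h)
      have hvl : v ∉ ψ.flatMap fun p => [p.1, p.2] :=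
        fun h => hv2 (hψsup ▸ mem_pivotSupport_of_reduced hψred h)
      refine ⟨(u, v) :: ψ, ⟨huv, hψapp⟩, ?_, ?_, ?_⟩
      · show (((u, v) :: ψ).flatMap fun p => [p.1, p.2]).Nodup
        rw [List.flatMap_cons]
        show (u :: v :: ψ.flatMap fun p => [p.1, p.2]).Nodup
        simp only [List.nodup_cons, List.mem_cons]
        exact ⟨by push_neg; exact ⟨hneuv, hul⟩, hvl, hψred⟩
      · rw [pivotSupport_cons u v hneuv, hψsup, symmDiff_comm]
        exact hsymm
      · show LG (applyPivots (G.pivot u v) ψ) = _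
        rw [hψLG, ← swap_LG G huv, Set.image_image, hcompfun]

/-- every applicable sequence of pivots admits an applicable reduced
sequence with the same support, hence with the same result. -/
theorem exists_reduced_sequence (G : SimpleGraph V) (phi : List (V × V))
    (h : PivotsApplicable G phi) :
    ∃ phi' : List (V × V), PivotsApplicable G phi' ∧ ReducedSeq phi' ∧
      pivotSupport phi' = pivotSupport phi ∧ applyPivots G phi' = applyPivots G phi := by
  have hL := LG_applyPivots phi G h
  have hgraph : ∀ a, ∃! b, (a, b) ∈ swapAt (pivotSupport phi) '' LG G := by
    rw [← hL]; exact LG_graph _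
  obtain ⟨ψ, h1, h2, h3, h4⟩ := reduce_main (pivotSupport phi).card (pivotSupport phi) rfl G hgraph
  exact ⟨ψ, h1, h2, h3, LG_inj (h4.trans hL.symm)⟩
end

section
/- Let V be a finite set, let A be a symmetric V × V matrix over GF(2) (a graph with loops), and let S ⊆ V. Then det(A[S]) = 1 if and only if there exists a sequence φ of operations applicable to A, each operation being either a local complementation *u at a looped vertex or a pivot [uv] at an edge between two distinct loop-free vertices, with sup(φ) = S (and in that case φ can be chosen so that no vertex occurs more than once in it). -/
set_option linter.unusedSectionVars false

variable {V : Type*} [Fintype V] [DecidableEq V]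

/-- Principal submatrix with rows and columns indexed by `S`. -/
def psub (A : Matrix V V (ZMod 2)) (S : Finset V) : Matrix S S (ZMod 2) :=
  A.submatrix (fun i : S => (i : V)) (fun j : S => (j : V))

/-- Local complementation at a looped vertex `u` of a graph with loops,
identified with its symmetric adjacency matrix over GF(2):
`(A*u)_{xy} = A_{xy} + A_{xu}·A_{uy}` for `x, y ≠ u`, entries in row/column `u` unchanged. -/
def matLC (A : Matrix V V (ZMod 2)) (u : V) : Matrix V V (ZMod 2) :=
  fun x y => if x = u ∨ y = u then A x y else A x y + A x u * A u y

/-- `s_A(x,y)` : `x = y` or `A_{xy} = 1`. -/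
def matNbr (A : Matrix V V (ZMod 2)) (x y : V) : Prop := x = y ∨ A x y = 1

/-- Pivot `A[uv]` on an edge `{u,v}` between two loop-free vertices of a graph with loops:
same diagonal as `A`, and for `x ≠ y`,
`(A[uv])_{xy} = A_{xy} XOR (s_A(x,u) ∧ s_A(y,v)) XOR (s_A(x,v) ∧ s_A(y,u))`. -/
noncomputable def matPivotEdge (A : Matrix V V (ZMod 2)) (u v : V) : Matrix V V (ZMod 2) := by
  classical
  exact fun x y =>
    if x = y then A x y
    else A x y + (if matNbr A x u ∧ matNbr A y v then 1 else 0)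
               + (if matNbr A x v ∧ matNbr A y u then 1 else 0)

/-- Apply a sequence of mixed operations (left to right): `Sum.inl u` is the local
complementation `*u`, `Sum.inr (u,v)` is the pivot `[uv]`. -/
noncomputable def applyOps (A : Matrix V V (ZMod 2)) : List (V ⊕ V × V) → Matrix V V (ZMod 2)
  | [] => A
  | (Sum.inl u) :: φ => applyOps (matLC A u) φ
  | (Sum.inr p) :: φ => applyOps (matPivotEdge A p.1 p.2) φ

/-- A mixed sequence is applicable when each operation's defining condition holds in the
matrix obtained by applying all preceding operations: `*u` needs a loop at `u`, and `[uv]`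
needs `u ≠ v`, both loop-free, and `A_{uv} = 1`. -/
def OpsApplicable (A : Matrix V V (ZMod 2)) : List (V ⊕ V × V) → Prop
  | [] => True
  | (Sum.inl u) :: φ => A u u = 1 ∧ OpsApplicable (matLC A u) φ
  | (Sum.inr p) :: φ => p.1 ≠ p.2 ∧ A p.1 p.1 = 0 ∧ A p.2 p.2 = 0 ∧ A p.1 p.2 = 1 ∧
      OpsApplicable (matPivotEdge A p.1 p.2) φ

/-- The list of vertex occurrences of a mixed sequence: `*u` contributes one occurrence
of `u`, `[uv]` one occurrence each of `u` and `v`. -/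
def opsVertices (φ : List (V ⊕ V × V)) : List V :=
  φ.flatMap fun o => match o with | Sum.inl u => [u] | Sum.inr p => [p.1, p.2]

/-- The support of a mixed sequence: vertices occurring an odd number of times. -/
def opsSupport (φ : List (V ⊕ V × V)) : Finset V :=
  Finset.univ.filter fun x => Odd ((opsVertices φ).count x)

-- Auxiliary lemmas

lemma zmod2_sub : ∀ a b : ZMod 2, a - b = a + b := by decide
lemma zmod2_two : ∀ a : ZMod 2, a + a = 0 := by decide
lemma zmod2_cases : ∀ a : ZMod 2, a = 0 ∨ a = 1 := by decide

lemma symm_apply {A : Matrix V V (ZMod 2)} (hA : A.IsSymm) (x y : V) : A x y = A y x := by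
  conv_lhs => rw [← hA]
  rfl

lemma matLC_isSymm {A : Matrix V V (ZMod 2)} (hA : A.IsSymm) (u : V) : (matLC A u).IsSymm := by
  apply Matrix.IsSymm.ext
  intro x y
  simp only [matLC]
  exact if_congr or_comm (symm_apply hA y x)
    (by rw [symm_apply hA y x, symm_apply hA y u, symm_apply hA u x]; ring)

lemma matPivotEdge_isSymm {A : Matrix V V (ZMod 2)} (hA : A.IsSymm) (u v : V) :
    (matPivotEdge A u v).IsSymm := by
  apply Matrix.IsSymm.ext
  intro x y
  simp only [matPivotEdge]
  by_cases h : x = y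
  · simp [h]
  · rw [if_neg h, if_neg (Ne.symm h), symm_apply hA y x]
    by_cases h1 : matNbr A x u <;> by_cases h2 : matNbr A y v <;>
      by_cases h3 : matNbr A x v <;> by_cases h4 : matNbr A y u <;>
      simp [h1, h2, h3, h4] <;> ring

/-- `Unit ⊕ (S \ {u}) ≃ S`. -/
def equivErase1 (S : Finset V) (u : V) (hu : u ∈ S) :
    (Unit ⊕ ↥(S.erase u)) ≃ ↥S where
  toFun := Sum.elim (fun _ => ⟨u, hu⟩) (fun x => ⟨x.1, Finset.mem_of_mem_erase x.2⟩)
  invFun x := if h : (x : V) = u then Sum.inl () else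
    Sum.inr ⟨x.1, Finset.mem_erase.2 ⟨h, x.2⟩⟩
  left_inv := by
    rintro (⟨⟩ | ⟨x, hx⟩)
    · simp
    · simp [Finset.ne_of_mem_erase hx]
  right_inv := by
    rintro ⟨x, hx⟩
    by_cases h : x = u
    · subst h; simp
    · simp [h]

lemma det_erase_lc (A : Matrix V V (ZMod 2)) (hA : A.IsSymm) (u : V) (huu : A u u = 1)
    (S : Finset V) (hu : u ∈ S) :
    (psub A S).det = (psub (matLC A u) (S.erase u)).det := by
  classical
  rw [← Matrix.det_submatrix_equiv_self (equivErase1 S u hu) (psub A S)]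
  have hblock : (psub A S).submatrix (equivErase1 S u hu) (equivErase1 S u hu) =
      Matrix.fromBlocks 1
        (Matrix.of fun (_ : Unit) (y : ↥(S.erase u)) => A u y)
        (Matrix.of fun (x : ↥(S.erase u)) (_ : Unit) => A x u)
        (Matrix.of fun (x y : ↥(S.erase u)) => A x y) := by
    ext i j
    rcases i with (⟨⟩ | ⟨x, hx⟩) <;> rcases j with (⟨⟩ | ⟨y, hy⟩) <;>
      simp [psub, equivErase1, Matrix.fromBlocks, huu, Matrix.one_apply]
  rw [hblock, Matrix.det_fromBlocks_one₁₁]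
  congr 1
  ext x y
  have hx := Finset.ne_of_mem_erase x.2
  have hy := Finset.ne_of_mem_erase y.2
  simp [psub, matLC, hx, hy, Matrix.sub_apply, Matrix.mul_apply, zmod2_sub]

/-- `Fin 2 ⊕ (S \ {u,v}) ≃ S`. -/
def equivErase2 (S : Finset V) (u v : V) (hu : u ∈ S) (hv : v ∈ S) (huv : u ≠ v) :
    (Fin 2 ⊕ ↥((S.erase u).erase v)) ≃ ↥S where
  toFun := Sum.elim (fun i => if i = 0 then ⟨u, hu⟩ else ⟨v, hv⟩)
    (fun x => ⟨x.1, Finset.mem_of_mem_erase (Finset.mem_of_mem_erase x.2)⟩)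
  invFun x := if h1 : (x : V) = u then Sum.inl 0 else if h2 : (x : V) = v then Sum.inl 1 else
    Sum.inr ⟨x.1, Finset.mem_erase.2 ⟨h2, Finset.mem_erase.2 ⟨h1, x.2⟩⟩⟩
  left_inv := by
    rintro (i | ⟨x, hx⟩)
    · fin_cases i <;> simp [huv.symm, huv]
    · have h2 : x ≠ v := Finset.ne_of_mem_erase hx
      have h1 : x ≠ u := Finset.ne_of_mem_erase (Finset.mem_of_mem_erase hx)
      simp [h1, h2]
  right_inv := by
    rintro ⟨x, hx⟩
    by_cases h1 : x = u
    · subst h1; simp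
    · by_cases h2 : x = v
      · subst h2; simp [h1]
      · simp [h1, h2]

lemma ite_and_mul (p q : Prop) [Decidable (p ∧ q)] (a b : ZMod 2)
    (hp : p ↔ a = 1) (hq : q ↔ b = 1) :
    (if p ∧ q then (1 : ZMod 2) else 0) = a * b := by
  have ha : a = 0 ∨ a = 1 := zmod2_cases a
  have hb : b = 0 ∨ b = 1 := zmod2_cases b
  by_cases hp' : p <;> by_cases hq' : q
  · rw [if_pos ⟨hp', hq'⟩, hp.1 hp', hq.1 hq']; ring
  · rcases hb with h | h
    · rw [if_neg (fun h' => hq' h'.2), h]; ring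
    · exact absurd (hq.2 h) hq'
  · rcases ha with h | h
    · rw [if_neg (fun h' => hp' h'.1), h]; ring
    · exact absurd (hp.2 h) hp'
  · rcases ha with h | h
    · rw [if_neg (fun h' => hp' h'.1), h]; ring
    · exact absurd (hp.2 h) hp'

lemma det_erase_pivot (A : Matrix V V (ZMod 2)) (hA : A.IsSymm) (u v : V) (huv : u ≠ v)
    (huu : A u u = 0) (hvv : A v v = 0) (he : A u v = 1)
    (S : Finset V) (hu : u ∈ S) (hv : v ∈ S) :
    (psub A S).det = (psub (matPivotEdge A u v) ((S.erase u).erase v)).det := by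
  classical
  set T := (S.erase u).erase v with hT
  set P : Matrix (Fin 2) (Fin 2) (ZMod 2) := !![0, 1; 1, 0] with hP
  have hPP : P * P = 1 := by
    ext i j; fin_cases i <;> fin_cases j <;>
      simp [hP, Matrix.mul_apply, Fin.sum_univ_two, Matrix.one_apply]
  letI : Invertible P := ⟨P, hPP, hPP⟩
  have hvu : A v u = 1 := by rw [← symm_apply hA]; exact he
  rw [← Matrix.det_submatrix_equiv_self (equivErase2 S u v hu hv huv) (psub A S)]
  have hblock : (psub A S).submatrix (equivErase2 S u v hu hv huv) (equivErase2 S u v hu hv huv) =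
      Matrix.fromBlocks P
        (Matrix.of fun (i : Fin 2) (y : ↥T) => A (if i = 0 then u else v) y)
        (Matrix.of fun (x : ↥T) (i : Fin 2) => A x (if i = 0 then u else v))
        (Matrix.of fun (x y : ↥T) => A x y) := by
    ext i j
    rcases i with (i | ⟨x, hx⟩) <;> rcases j with (j | ⟨y, hy⟩)
    · fin_cases i <;> fin_cases j <;>
        simp [psub, equivErase2, Matrix.fromBlocks, hP, huu, hvv, he, hvu]
    · fin_cases i <;> simp [psub, equivErase2, Matrix.fromBlocks]
    · fin_cases j <;> simp [psub, equivErase2, Matrix.fromBlocks]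
    · simp [psub, equivErase2, Matrix.fromBlocks]
  rw [hblock, Matrix.det_fromBlocks₁₁]
  have hdetP : P.det = 1 := by rw [hP]; decide
  have hinvP : ⅟P = P := rfl
  rw [hdetP, hinvP, one_mul]
  congr 1
  ext x y
  have hx2 : (x : V) ≠ v := Finset.ne_of_mem_erase x.2
  have hx1 : (x : V) ≠ u := Finset.ne_of_mem_erase (Finset.mem_of_mem_erase x.2)
  have hy2 : (y : V) ≠ v := Finset.ne_of_mem_erase y.2
  have hy1 : (y : V) ≠ u := Finset.ne_of_mem_erase (Finset.mem_of_mem_erase y.2)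
  have hrhs : (Matrix.of (fun (x y : ↥T) => A x y) - Matrix.of (fun (x : ↥T) (i : Fin 2) =>
      A x (if i = 0 then u else v)) * P * Matrix.of fun (i : Fin 2) (y : ↥T) =>
      A (if i = 0 then u else v) y) x y
      = A x y + (A x v * A u y + A x u * A v y) := by
    simp [Matrix.sub_apply, Matrix.mul_apply, Fin.sum_univ_two, hP, zmod2_sub]
  rw [hrhs]
  symm
  show matPivotEdge A u v x y = _
  rw [matPivotEdge]
  by_cases hxy : (x : V) = (y : V)
  · rw [if_pos hxy, ← hxy, symm_apply hA u x, symm_apply hA v x]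
    have : A x v * A x u + A x u * A x v = 0 := by
      rw [mul_comm]; exact zmod2_two _
    rw [this, add_zero]
  · rw [if_neg hxy]
    rw [ite_and_mul _ _ (A x u) (A y v)
        (by simp [matNbr, hx1]) (by simp [matNbr, hy2]),
      ite_and_mul _ _ (A x v) (A y u)
        (by simp [matNbr, hx2]) (by simp [matNbr, hy1])]
    rw [symm_apply hA u y, symm_apply hA v y]
    ring

lemma opsVertices_nil : opsVertices ([] : List (V ⊕ V × V)) = [] := rfl

lemma opsVertices_inl (u : V) (φ : List (V ⊕ V × V)) :
    opsVertices (Sum.inl u :: φ) = u :: opsVertices φ := rfl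

lemma opsVertices_inr (u v : V) (φ : List (V ⊕ V × V)) :
    opsVertices (Sum.inr (u, v) :: φ) = u :: v :: opsVertices φ := rfl

lemma opsSupport_nil : opsSupport ([] : List (V ⊕ V × V)) = ∅ := by
  ext x; simp [opsSupport, opsVertices_nil]

lemma opsSupport_inr_eq (u v : V) (φ : List (V ⊕ V × V)) :
    opsSupport (Sum.inr (u, v) :: φ) = opsSupport (Sum.inl u :: Sum.inl v :: φ) := rfl

lemma opsSupport_cons_inl (u : V) (φ : List (V ⊕ V × V)) (hu : u ∉ opsVertices φ) :
    opsSupport (Sum.inl u :: φ) = insert u (opsSupport φ) := by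
  ext x
  simp only [opsSupport, Finset.mem_filter, Finset.mem_univ, true_and]
  simp only [opsSupport, Finset.mem_filter, Finset.mem_univ, true_and, Finset.mem_insert,
    opsVertices_inl]
  by_cases hxu : x = u
  · subst hxu
    rw [List.count_cons_self, List.count_eq_zero.2 hu]
    simp
  · rw [List.count_cons_of_ne (Ne.symm hxu)]
    simp [hxu]

lemma not_mem_support' {u : V} {φ : List (V ⊕ V × V)} (hu : u ∉ opsVertices φ) :
    u ∉ opsSupport φ := by
  simp [opsSupport, List.count_eq_zero.2 hu]

lemma mem_support'_of_mem {u : V} {φ : List (V ⊕ V × V)} (hnd : (opsVertices φ).Nodup)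
    (hu : u ∈ opsVertices φ) : u ∈ opsSupport φ := by
  simp [opsSupport, List.count_eq_one_of_mem hnd hu]

lemma backward_aux : ∀ (φ : List (V ⊕ V × V)) (A : Matrix V V (ZMod 2)), A.IsSymm →
    OpsApplicable A φ → (opsVertices φ).Nodup → (psub A (opsSupport φ)).det = 1
  | [], A, _, _, _ => by
      rw [opsSupport_nil]
      haveI : IsEmpty ↥(∅ : Finset V) := ⟨fun x => (Finset.notMem_empty x.1 x.2)⟩
      exact Matrix.det_isEmpty
  | Sum.inl u :: ψ, A, hA, happ, hnd => by
      obtain ⟨huu, happ'⟩ := happ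
      rw [opsVertices_inl, List.nodup_cons] at hnd
      obtain ⟨hu, hnd'⟩ := hnd
      rw [opsSupport_cons_inl u ψ hu,
        det_erase_lc A hA u huu _ (Finset.mem_insert_self u _),
        Finset.erase_insert (not_mem_support' hu)]
      exact backward_aux ψ (matLC A u) (matLC_isSymm hA u) happ' hnd'
  | Sum.inr (u, v) :: ψ, A, hA, happ, hnd => by
      obtain ⟨hne, huu, hvv, he, happ'⟩ := happ
      rw [opsVertices_inr, List.nodup_cons, List.nodup_cons] at hnd
      obtain ⟨hu, hv, hnd'⟩ := hnd
      have huψ : u ∉ opsVertices ψ := fun h => hu (List.mem_cons_of_mem _ h)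
      have huv : u ≠ v := fun h => hu (h ▸ List.mem_cons_self)
      rw [opsSupport_inr_eq, opsSupport_cons_inl u _ (by rw [opsVertices_inl]; exact hu),
        opsSupport_cons_inl v ψ hv]
      have hvT : v ∉ opsSupport ψ := not_mem_support' hv
      have huT : u ∉ opsSupport ψ := not_mem_support' huψ
      have hmu : u ∈ insert u (insert v (opsSupport ψ)) := Finset.mem_insert_self _ _
      have hmv : v ∈ insert u (insert v (opsSupport ψ)) :=
        Finset.mem_insert_of_mem (Finset.mem_insert_self _ _)
      rw [det_erase_pivot A hA u v huv huu hvv he _ hmu hmv,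
        Finset.erase_insert (by simp [huv, huT]),
        Finset.erase_insert hvT]
      exact backward_aux ψ (matPivotEdge A u v) (matPivotEdge_isSymm hA u v) happ' hnd'

lemma forward_aux : ∀ (n : ℕ) (S : Finset V), S.card ≤ n → ∀ A : Matrix V V (ZMod 2), A.IsSymm →
    (psub A S).det = 1 →
    ∃ φ : List (V ⊕ V × V), OpsApplicable A φ ∧ opsSupport φ = S ∧ (opsVertices φ).Nodup := by
  intro n
  induction n with
  | zero =>
    intro S hS A _ _
    have : S = ∅ := Finset.card_eq_zero.1 (Nat.le_zero.1 hS)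
    exact ⟨[], trivial, by rw [opsSupport_nil, this], List.nodup_nil⟩
  | succ n ih =>
    intro S hS A hA hdet
    rcases S.eq_empty_or_nonempty with hSe | hSne
    · exact ⟨[], trivial, by rw [opsSupport_nil, hSe], List.nodup_nil⟩
    by_cases hdiag : ∃ u ∈ S, A u u = 1
    · obtain ⟨u, hu, huu⟩ := hdiag
      have hdet' : (psub (matLC A u) (S.erase u)).det = 1 := by
        rw [← det_erase_lc A hA u huu S hu]; exact hdet
      have hcard : (S.erase u).card ≤ n := by
        rw [Finset.card_erase_of_mem hu]
        have := Finset.card_pos.2 hSne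
        omega
      obtain ⟨ψ, h1, h2, h3⟩ := ih (S.erase u) hcard (matLC A u) (matLC_isSymm hA u) hdet'
      have hunotin : u ∉ opsVertices ψ := fun h =>
        Finset.notMem_erase u S (h2 ▸ mem_support'_of_mem h3 h)
      refine ⟨Sum.inl u :: ψ, ⟨huu, h1⟩, ?_, ?_⟩
      · rw [opsSupport_cons_inl u ψ hunotin, h2, Finset.insert_erase hu]
      · rw [opsVertices_inl]; exact List.nodup_cons.2 ⟨hunotin, h3⟩
    · push_neg at hdiag
      have hdiag0 : ∀ u ∈ S, A u u = 0 := fun u hu =>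
        (zmod2_cases (A u u)).resolve_right (hdiag u hu)
      have hedge : ∃ u ∈ S, ∃ v ∈ S, u ≠ v ∧ A u v = 1 := by
        by_contra hno
        push_neg at hno
        have hz : psub A S = 0 := by
          ext x y
          by_cases hxy : (x : V) = (y : V)
          · show A x y = 0
            rw [hxy]; exact hdiag0 _ y.2
          · show A x y = 0
            exact (zmod2_cases (A x y)).resolve_right (hno x x.2 y y.2 (fun h => hxy h))
        haveI : Nonempty ↥S := hSne.to_subtype
        rw [hz, Matrix.det_zero] at hdet
        exact absurd hdet (by decide)
      obtain ⟨u, hu, v, hv, hne2, he⟩ := hedge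
      have huu := hdiag0 u hu
      have hvv := hdiag0 v hv
      have hvmem : v ∈ S.erase u := Finset.mem_erase.2 ⟨hne2.symm, hv⟩
      have hdet' : (psub (matPivotEdge A u v) ((S.erase u).erase v)).det = 1 := by
        rw [← det_erase_pivot A hA u v hne2 huu hvv he S hu hv]; exact hdet
      have hcard : ((S.erase u).erase v).card ≤ n := by
        rw [Finset.card_erase_of_mem hvmem, Finset.card_erase_of_mem hu]
        have := Finset.card_pos.2 hSne
        omega
      obtain ⟨ψ, h1, h2, h3⟩ := ih ((S.erase u).erase v) hcard (matPivotEdge A u v)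
        (matPivotEdge_isSymm hA u v) hdet'
      have hun : u ∉ opsVertices ψ := fun h => by
        have := h2 ▸ mem_support'_of_mem h3 h
        exact Finset.notMem_erase u S (Finset.mem_of_mem_erase (Finset.mem_erase.1 this).2
          |> fun hh => (Finset.mem_erase.1 this).2)
      have hvn : v ∉ opsVertices ψ := fun h =>
        Finset.notMem_erase v (S.erase u) (h2 ▸ mem_support'_of_mem h3 h)
      refine ⟨Sum.inr (u, v) :: ψ, ⟨hne2, huu, hvv, he, h1⟩, ?_, ?_⟩
      · rw [opsSupport_inr_eq, opsSupport_cons_inl u _ (by rw [opsVertices_inl]; simp [hun, hne2]),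
          opsSupport_cons_inl v ψ hvn, h2, Finset.insert_erase hvmem, Finset.insert_erase hu]
      · rw [opsVertices_inr]
        exact List.nodup_cons.2 ⟨by simp [hne2, hun], List.nodup_cons.2 ⟨hvn, h3⟩⟩

/-- `det(A[S]) = 1` iff there is an applicable mixed sequence of local
complementations and pivots with support `S` (which can be chosen with no vertex
occurring more than once). -/
theorem det_eq_one_iff_exists_ops (A : Matrix V V (ZMod 2)) (hA : A.IsSymm) (S : Finset V) :
    (psub A S).det = 1 ↔
      ∃ φ : List (V ⊕ V × V), OpsApplicable A φ ∧ opsSupport φ = S ∧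
        (opsVertices φ).Nodup := by
  constructor
  · intro h
    exact forward_aux S.card S le_rfl A hA h
  · rintro ⟨φ, h1, h2, h3⟩
    rw [← h2]
    exact backward_aux φ A hA h1 h3
end
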